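/- Let F be a continuous distribution function on ℝ, and suppose for each n ∈ ℕ the copula diagonal is a power, δ_n(u) = u^{η_n} for u ∈ [0,1], where η_n ≥ 1 and η_n → ∞ as n → ∞. Assume there exist a GEV distribution function H, sequences (c*_n), c*_n > 0, and (d*_n), and β* : ℕ → [0,∞) with β*(n) → 0 such that sup_{x∈ℝ} |F(c*_n x + d*_n)^n − H(x)| ≤ β*(n) for all n. Then for all n, sup_{x∈ℝ} |F(c*_{⌈η_n⌉} x + d*_{⌈η_n⌉})^{η_n} − H(x)| ≤ β*(⌈η_n⌉) + 3 e^{−1} · 1_{{η_n ∉ ℕ}} / η_n. Additionally, if β* is monotonically decreasing and η_n ≤ n for all n (as holds when the underlying n-dimensional copula is positively quadrant dependent, i.e., u^n ≤ u^{η_n} for all u ∈ [0,1]), then β*(⌈η_n⌉) ≥ β*(n). (Corollary on convergence rates for sequences with power diagonals.) -/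

import Mathlib

open Filter Set Topology

/-- The generalized extreme value (GEV) distribution function `H_{ξ,μ,σ}`. -/
noncomputable def GEVcdf (ξ μ σ : ℝ) : ℝ → ℝ := fun x =>
  if ξ = 0 then Real.exp (-Real.exp (-(x - μ) / σ))
  else if 0 < 1 + ξ * (x - μ) / σ then Real.exp (-(1 + ξ * (x - μ) / σ) ^ (-1 / ξ))
  else if 0 < ξ then 0 else 1

/-- A distribution function is GEV if it equals some `H_{ξ,μ,σ}` with `σ > 0`. -/
def IsGEV (H : ℝ → ℝ) : Prop := ∃ ξ μ σ : ℝ, 0 < σ ∧ H = GEVcdf ξ μ σ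

/-- A distribution function on `ℝ`: nondecreasing, right-continuous, with limits 0 at `-∞`
and 1 at `∞`, taking values in `[0,1]`. -/
def IsDistFun (F : ℝ → ℝ) : Prop :=
  Monotone F ∧ (∀ x, ContinuousWithinAt F (Ici x) x) ∧
    Tendsto F atBot (nhds 0) ∧ Tendsto F atTop (nhds 1) ∧ ∀ x, F x ∈ Icc (0:ℝ) 1

/-- The properties of the diagonal `u ↦ C_n(u,…,u)` of an `n`-dimensional copula. -/
def IsCopulaDiagonal (n : ℕ) (δ : ℝ → ℝ) : Prop :=
  δ 0 = 0 ∧ δ 1 = 1 ∧ MonotoneOn δ (Icc 0 1) ∧ (∀ u ∈ Icc (0:ℝ) 1, δ u ≤ u) ∧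
    ∀ u ∈ Icc (0:ℝ) 1, ∀ v ∈ Icc (0:ℝ) 1, |δ u - δ v| ≤ (n : ℝ) * |u - v|

/-- A distribution function on `[0,1]`: nondecreasing, right-continuous, `D(0)=0`, `D(1)=1`,
with values in `[0,1]`. -/
def IsDistFun01 (D : ℝ → ℝ) : Prop :=
  D 0 = 0 ∧ D 1 = 1 ∧ MonotoneOn D (Icc 0 1) ∧
    (∀ u ∈ Ico (0:ℝ) 1, ContinuousWithinAt D (Icc u 1) u) ∧
    ∀ u ∈ Icc (0:ℝ) 1, D u ∈ Icc (0:ℝ) 1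

/-- A degenerate distribution function `x ↦ 1_{[a,∞)}(x)`. -/
noncomputable def IsDegenerateDF (G : ℝ → ℝ) : Prop :=
  ∃ a : ℝ, ∀ x, G x = if a ≤ x then 1 else 0

/-- An Archimedean generator: continuous on `[0,∞)`, `ψ(0)=1`, values in `[0,1]`,
`ψ(t) → 0` as `t → ∞`, strictly decreasing on `[0, inf{x : ψ(x)=0}]` (equivalently,
strictly decreasing as long as it is positive). -/
def IsArchimedeanGenerator (ψ : ℝ → ℝ) : Prop :=
  ContinuousOn ψ (Ici 0) ∧ ψ 0 = 1 ∧ (∀ t ∈ Ici (0:ℝ), ψ t ∈ Icc (0:ℝ) 1) ∧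
    Tendsto ψ atTop (nhds 0) ∧
    ∀ s t : ℝ, 0 ≤ s → s < t → 0 < ψ s → ψ t < ψ s


lemma aux_mul_exp (s : ℝ) (hs : 0 ≤ s) : s * Real.exp (-s) ≤ Real.exp (-1) := by
  have h : s ≤ Real.exp (s - 1) := by
    have := Real.add_one_le_exp (s - 1); linarith
  calc s * Real.exp (-s) ≤ Real.exp (s - 1) * Real.exp (-s) :=
        mul_le_mul_of_nonneg_right h (Real.exp_nonneg _)
    _ = Real.exp (-1) := by rw [← Real.exp_add]; ring_nf

lemma gap_bound (y a : ℝ) (hy0 : 0 ≤ y) (hy1 : y ≤ 1) (ha : 0 < a) (m : ℕ)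
    (ham : a ≤ (m : ℝ)) (hm1 : (m : ℝ) ≤ a + 1) :
    |y ^ a - y ^ m| ≤ Real.exp (-1) / a := by
  rcases eq_or_lt_of_le hy0 with h0 | hy
  · rw [← h0]
    have hm0 : m ≠ 0 := by
      rintro rfl; simp at ham; linarith
    rw [Real.zero_rpow (ne_of_gt ha), zero_pow hm0]
    simp [le_div_iff₀ ha, Real.exp_nonneg]
  · set L := Real.log y with hLdef
    have hL : L ≤ 0 := Real.log_nonpos hy0 hy1
    have h1 : y ^ a = Real.exp (a * L) := by
      rw [Real.rpow_def_of_pos hy, mul_comm]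
    have h2 : (y : ℝ) ^ m = Real.exp ((m : ℝ) * L) := by
      rw [← Real.rpow_natCast y m, Real.rpow_def_of_pos hy, mul_comm]
    have hnn : y ^ m ≤ y ^ a := by
      rw [← Real.rpow_natCast y m]
      exact Real.rpow_le_rpow_of_exponent_ge hy hy1 ham
    rw [abs_of_nonneg (by linarith), h1, h2]
    have h3 : Real.exp (a * L) - Real.exp ((m : ℝ) * L)
        = Real.exp (a * L) * (1 - Real.exp (((m : ℝ) - a) * L)) := by
      rw [mul_sub, mul_one, ← Real.exp_add]
      congr 2; ring
    have h4 : 1 - Real.exp (((m : ℝ) - a) * L) ≤ -(((m : ℝ) - a) * L) := by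
      have := Real.add_one_le_exp (((m : ℝ) - a) * L); linarith
    have h5 : -(((m : ℝ) - a) * L) ≤ -L := by nlinarith
    have haux := aux_mul_exp (a * (-L)) (mul_nonneg ha.le (neg_nonneg.mpr hL))
    have h6 : Real.exp (a * L) * (-L) = (a * (-L)) * Real.exp (-(a * (-L))) / a := by
      field_simp
    have hexp : (0 : ℝ) ≤ Real.exp (a * L) := Real.exp_nonneg _
    calc Real.exp (a * L) - Real.exp ((m : ℝ) * L)
        = Real.exp (a * L) * (1 - Real.exp (((m : ℝ) - a) * L)) := h3
      _ ≤ Real.exp (a * L) * (-L) := by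
          apply mul_le_mul_of_nonneg_left _ hexp; linarith
      _ = (a * (-L)) * Real.exp (-(a * (-L))) / a := h6
      _ ≤ Real.exp (-1) / a := by gcongr

open scoped Classical in
/-- Corollary on convergence rates for sequences with power diagonals. -/
theorem power_diagonal_convergence_rate
    (F H : ℝ → ℝ) (cs ds : ℕ → ℝ) (η β : ℕ → ℝ)
    (hF : IsDistFun F) (hFcont : Continuous F)
    (hη1 : ∀ n, 1 ≤ η n) (hηtop : Tendsto η atTop atTop)
    (hH : IsGEV H) (hcs : ∀ n, 0 < cs n)
    (hβ0 : ∀ n, 0 ≤ β n) (hβ : Tendsto β atTop (nhds 0))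
    (hβbound : ∀ n x, |F (cs n * x + ds n) ^ n - H x| ≤ β n) :
    (∀ n x, |F (cs (Nat.ceil (η n)) * x + ds (Nat.ceil (η n))) ^ (η n) - H x| ≤
      β (Nat.ceil (η n)) +
        3 * Real.exp (-1) * (if ∃ m : ℕ, η n = (m : ℝ) then 0 else 1) / η n) ∧
    (Antitone β → (∀ n, η n ≤ (n : ℝ)) → ∀ n, β n ≤ β (Nat.ceil (η n))) := by
  constructor
  · intro n x
    have hηpos : (0:ℝ) < η n := lt_of_lt_of_le one_pos (hη1 n)
    set m := Nat.ceil (η n) with hm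
    set y := F (cs m * x + ds m) with hy
    have hyI : y ∈ Icc (0:ℝ) 1 := hF.2.2.2.2 (cs m * x + ds m)
    have hβm := hβbound m x
    by_cases hint : ∃ k : ℕ, η n = (k : ℝ)
    · rw [if_pos hint]
      obtain ⟨k, hk⟩ := hint
      have hmk : m = k := by rw [hm, hk, Nat.ceil_natCast]
      have hpow : y ^ (η n) = y ^ m := by
        rw [hk, hmk, Real.rpow_natCast]
      rw [hpow]
      simpa using hβm
    · rw [if_neg hint]
      have gap := gap_bound y (η n) hyI.1 hyI.2 hηpos m (Nat.le_ceil _)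
        (le_of_lt (Nat.ceil_lt_add_one hηpos.le))
      have hfin : Real.exp (-1) / η n ≤ 3 * Real.exp (-1) * 1 / η n := by
        gcongr
        nlinarith [Real.exp_pos (-1)]
      calc |y ^ (η n) - H x| ≤ |y ^ (η n) - y ^ m| + |y ^ m - H x| := abs_sub_le _ _ _
        _ ≤ Real.exp (-1) / η n + β m := add_le_add gap hβm
        _ ≤ β m + 3 * Real.exp (-1) * 1 / η n := by linarith
  · intro hA hle n
    exact hA (Nat.ceil_le.mpr (hle n))
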